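/- Let S be a finite set of distinct even nonnegative integers and T a finite set of complex numbers with |T| = |S|, such that the L(L+1), L ∈ T, are pairwise distinct and differ from all l(l+1), l ∈ S, and cos(Lπ/2) ≠ 0 for all L ∈ T. Then the unique solution (a_L)_{L∈T} of the system ∑_{L∈T} a_L · cos(Lπ/2)/(L(L+1) − l(l+1)) = 1 for all l ∈ S is given by a_L = [∏_{l∈S} (L(L+1) − l(l+1)) / ∏_{L'∈T, L'≠L} (L(L+1) − L'(L'+1))] · 1/cos(Lπ/2). -/

import Mathlib

open Polynomial Lagrange Finset in
/-- General Cauchy-system solution via Lagrange interpolation. -/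
theorem cauchy_system_solution {F : Type*} [Field F] {ι κ : Type*}
    [DecidableEq ι] [DecidableEq κ]
    (s : Finset ι) (t : Finset κ) (v : ι → F) (w : κ → F)
    (hcard : s.card = t.card)
    (hv : Set.InjOn v s) (hw : Set.InjOn w t)
    (hvw : ∀ i ∈ s, ∀ j ∈ t, v i ≠ w j)
    (b : ι → F) :
    (∀ j ∈ t, ∑ i ∈ s, b i / (v i - w j) = 1) ↔
    (∀ i ∈ s, b i = (∏ j ∈ t, (v i - w j)) * nodalWeight s v i) := by
  set P : F[X] := nodal s v with hP
  set Q : F[X] := nodal t w with hQdef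
  set r : ι → F := fun i => Q.eval (v i) with hr
  have hre : ∀ i, r i = ∏ j ∈ t, (v i - w j) := fun i => eval_nodal
  -- Q = P + interpolate of r
  have hQP : Q = P + interpolate s v r := by
    have hdeg : (Q - P).degree < (s.card : WithBot ℕ) := by
      have h1 : Q.degree = P.degree := by
        rw [degree_nodal, degree_nodal, hcard]
      have := Polynomial.degree_sub_lt h1 (nodal_ne_zero) (by
        rw [(nodal_monic : Q.Monic).leadingCoeff, (nodal_monic : P.Monic).leadingCoeff])
      rw [h1, degree_nodal] at this
      exact_mod_cast this
    have h2 := Lagrange.eq_interpolate hv hdeg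
    have h4 : interpolate s v (fun i => (Q - P).eval (v i)) = interpolate s v r := by
      refine Lagrange.interpolate_eq_of_values_eq_on _ _ fun i hi => ?_
      simp [hP, eval_nodal_at_node hi, hr]
    have h5 : Q - P = interpolate s v r := by rw [h2, h4]
    linear_combination (norm := ring_nf) h5
  -- key identity at each node w j
  have hkey : ∀ j ∈ t, ∑ i ∈ s, nodalWeight s v i * (w j - v i)⁻¹ * r i = -1 := by
    intro j hj
    have hx : ∀ i ∈ s, w j ≠ v i := fun i hi => (hvw i hi j hj).symm
    have hPne : P.eval (w j) ≠ 0 := eval_nodal_not_at_node hx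
    have h0 : Q.eval (w j) = 0 := eval_nodal_at_node hj
    have h6 := congrArg (Polynomial.eval (w j)) hQP
    rw [h0, eval_add, eval_interpolate_not_at_node r hx] at h6
    have h5 : P.eval (w j) * (1 + ∑ i ∈ s, nodalWeight s v i * (w j - v i)⁻¹ * r i) = 0 := by
      rw [mul_add, mul_one, ← h6]
    rcases mul_eq_zero.mp h5 with h | h
    · exact absurd h hPne
    · linear_combination h
  -- the explicit formula solves the system
  have hsolves : ∀ j ∈ t,
      ∑ i ∈ s, ((∏ j' ∈ t, (v i - w j')) * nodalWeight s v i) / (v i - w j) = 1 := by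
    intro j hj
    have : ∀ i ∈ s, ((∏ j' ∈ t, (v i - w j')) * nodalWeight s v i) / (v i - w j)
        = -(nodalWeight s v i * (w j - v i)⁻¹ * r i) := by
      intro i hi
      rw [hre, div_eq_mul_inv]
      have : (v i - w j)⁻¹ = -((w j - v i)⁻¹) := by
        rw [← inv_neg]; ring_nf
      rw [this]; ring
    rw [Finset.sum_congr rfl this, Finset.sum_neg_distrib, hkey j hj]
    ring
  constructor
  · -- uniqueness direction
    intro hsys i hi
    set b₀ : ι → F := fun i => (∏ j ∈ t, (v i - w j)) * nodalWeight s v i with hb₀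
    set c : ι → F := fun i => b i - b₀ i with hc
    have hzero : ∀ j ∈ t, ∑ i ∈ s, c i / (v i - w j) = 0 := by
      intro j hj
      have := hsolves j hj
      have h7 := hsys j hj
      calc ∑ i ∈ s, c i / (v i - w j)
          = ∑ i ∈ s, (b i / (v i - w j) - b₀ i / (v i - w j)) := by
            refine Finset.sum_congr rfl fun i _ => ?_; rw [hc, sub_div]
        _ = (∑ i ∈ s, b i / (v i - w j)) - ∑ i ∈ s, b₀ i / (v i - w j) := Finset.sum_sub_distrib _ _
        _ = 0 := by rw [h7, this]; ring
    set N : F[X] := interpolate s v (fun i => c i / nodalWeight s v i) with hN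
    have hNzero : N = 0 := by
      have hdegN : N.degree < (t.card : WithBot ℕ) := by
        have := Lagrange.degree_interpolate_lt (r := fun i => c i / nodalWeight s v i) hv
        rwa [hcard] at this
      refine Polynomial.eq_zero_of_degree_lt_of_eval_index_eq_zero t hw
        (by exact_mod_cast hdegN) fun j hj => ?_
      have hx : ∀ i ∈ s, w j ≠ v i := fun i hi => (hvw i hi j hj).symm
      rw [hN, eval_interpolate_not_at_node _ hx]
      have : ∀ i ∈ s, nodalWeight s v i * (w j - v i)⁻¹ * (c i / nodalWeight s v i)
          = -(c i / (v i - w j)) := by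
        intro i hi
        have hnw := nodalWeight_ne_zero hv hi
        have hstep : nodalWeight s v i * (w j - v i)⁻¹ * (c i / nodalWeight s v i)
            = c i * (w j - v i)⁻¹ := by
          rw [div_eq_mul_inv]
          calc nodalWeight s v i * (w j - v i)⁻¹ * (c i * (nodalWeight s v i)⁻¹)
              = c i * (w j - v i)⁻¹ * (nodalWeight s v i * (nodalWeight s v i)⁻¹) := by ring
            _ = c i * (w j - v i)⁻¹ := by rw [mul_inv_cancel₀ hnw, mul_one]
        rw [hstep, ← neg_sub (v i) (w j), inv_neg, div_eq_mul_inv]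
        ring
      rw [Finset.sum_congr rfl this, Finset.sum_neg_distrib, hzero j hj]
      ring
    have h8 : c i / nodalWeight s v i = 0 := by
      have := Lagrange.eval_interpolate_at_node (r := fun i => c i / nodalWeight s v i) hv hi
      rw [← hN, hNzero] at this
      simpa using this.symm
    have hnw := nodalWeight_ne_zero hv hi
    have hc0 : c i = 0 := by
      have := (div_mul_cancel₀ (c i) hnw).symm
      rw [h8, zero_mul] at this
      exact this
    exact sub_eq_zero.mp hc0
  · intro hform j hj
    rw [Finset.sum_congr rfl fun i hi => by rw [hform i hi]]
    exact hsolves j hj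

/-- Semi-analytic solution of the even-parity Cox–Thompson asymptotic system. -/
theorem stmt_6 (S : Finset ℕ) (T : Finset ℂ)
    (hcard : T.card = S.card)
    (hSeven : ∀ l ∈ S, Even l)
    (hT : ∀ L ∈ T, ∀ L' ∈ T, L * (L + 1) = L' * (L' + 1) → L = L')
    (hTS : ∀ L ∈ T, ∀ l ∈ S, L * (L + 1) ≠ (l : ℂ) * ((l : ℂ) + 1))
    (hcos : ∀ L ∈ T, Complex.cos (L * (Real.pi : ℂ) / 2) ≠ 0)
    (a : ℂ → ℂ) :
    (∀ l ∈ S, ∑ L ∈ T,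
        a L * Complex.cos (L * (Real.pi : ℂ) / 2) / (L * (L + 1) - (l : ℂ) * ((l : ℂ) + 1)) = 1) ↔
    (∀ L ∈ T, a L =
        ((∏ l ∈ S, (L * (L + 1) - (l : ℂ) * ((l : ℂ) + 1))) /
          (∏ L' ∈ T.erase L, (L * (L + 1) - L' * (L' + 1)))) *
          (Complex.cos (L * (Real.pi : ℂ) / 2))⁻¹) := by
  classical
  set v : ℂ → ℂ := fun L => L * (L + 1) with hv'
  set w : ℕ → ℂ := fun l => (l : ℂ) * ((l : ℂ) + 1) with hw'
  have hv : Set.InjOn v T := fun L hL L' hL' h => hT L hL L' hL' h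
  have hw : Set.InjOn w S := by
    intro l hl l' hl' h
    have : ((l * (l + 1) : ℕ) : ℂ) = ((l' * (l' + 1) : ℕ) : ℂ) := by push_cast; exact h
    have h2 : l * (l + 1) = l' * (l' + 1) := Nat.cast_injective this
    nlinarith [Nat.le_total l l']
  have hvw : ∀ L ∈ T, ∀ l ∈ S, v L ≠ w l := hTS
  have key := cauchy_system_solution T S v w hcard hv hw hvw
    (fun L => a L * Complex.cos (L * (Real.pi : ℂ) / 2))
  rw [key]
  constructor <;> intro h L hL <;> have hc := hcos L hL <;> have h9 := h L hL
  · rw [eq_mul_inv_iff_mul_eq₀ hc]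
    rw [h9, Lagrange.nodalWeight, div_eq_mul_inv, ← Finset.prod_inv_distrib]
  · rw [eq_mul_inv_iff_mul_eq₀ hc] at h9
    rw [h9, Lagrange.nodalWeight, div_eq_mul_inv, ← Finset.prod_inv_distrib]
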